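/- Suppose there exists δ > 0 such that for every φ : J → ℝ with φ_j ≥ 0 for all j and ‖φ‖ = 1 (Euclidean norm on ℝ^J), sup_{x ∈ F_κ} f_φ(x) ≥ δ. Let l = inf_{x ∈ F_κ} f_o(x). Then: (i) for every φ ∈ Ψ, D(φ) ≥ l + δ·‖φ‖ (so D is coercive on Ψ); (ii) the infimum of D over Ψ is attained at some φ* ∈ Ψ; and (iii) for any fixed φ₀ ∈ Ψ, setting b = (D(φ₀) − l)/δ, every minimizer φ* of D over Ψ satisfies ‖φ*‖ ≤ b, so that inf_{φ ∈ Ψ} D(φ) = min over the bounded set Ψ^b = {φ ∈ Ψ | ‖φ‖ ≤ b} of D. -/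

import Mathlib

open Matrix ComplexOrder

/-- On a nonempty compact set, a continuous real function attains its `sSup`. -/
lemma aux_csSup_attained {α : Type*} [TopologicalSpace α] {K : Set α}
    (hK : IsCompact K) (hne : K.Nonempty) {g : α → ℝ} (hg : Continuous g) :
    ∃ x ∈ K, (∀ y ∈ K, g y ≤ g x) ∧ sSup (g '' K) = g x := by
  obtain ⟨x, hx, hmax⟩ := hK.exists_isMaxOn hne hg.continuousOn
  refine ⟨x, hx, fun y hy => hmax hy, le_antisymm ?_ ?_⟩
  · exact csSup_le (hne.image g) (by rintro _ ⟨y, hy, rfl⟩; exact hmax hy)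
  · exact le_csSup (hK.image hg).bddAbove ⟨x, hx, rfl⟩

/-- Lemma 3. If every nonnegative unit-norm multiplier direction `φ`
satisfies `sup_{x ∈ Fκ} f_φ(x) ≥ δ > 0`, then with `l = inf_{x ∈ Fκ} f_o(x)`:
(i) `D(φ) ≥ l + δ‖φ‖` on `Ψ` (coercivity); (ii) the infimum of `D` over `Ψ` is attained;
(iii) for any `φ₀ ∈ Ψ`, with `b = (D(φ₀) − l)/δ`, every minimizer of `D` over `Ψ` lies in
the bounded set `Ψ^b`, and `inf_{Ψ} D = inf_{Ψ^b} D`. -/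
theorem dual_coercive_and_bounded_multipliers
    (n : ℕ) (hn : 1 ≤ n) (J : Type) [Fintype J]
    (Ao : Matrix (Fin n) (Fin n) ℂ) (A : J → Matrix (Fin n) (Fin n) ℂ)
    (so : Fin n → ℂ) (s : J → Fin n → ℂ) (co : ℝ) (c : J → ℝ)
    (hAo : Ao.IsHermitian) (hA : ∀ j, (A j).IsHermitian)
    (fo : (Fin n → ℂ) → ℝ)
    (hfo : ∀ x, fo x = 2 * (star so ⬝ᵥ x).re - (star x ⬝ᵥ Ao.mulVec x).re + co)
    (f : J → (Fin n → ℂ) → ℝ)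
    (hf : ∀ j x, f j x = 2 * (star (s j) ⬝ᵥ x).re - (star x ⬝ᵥ (A j).mulVec x).re + c j)
    (L : (J → ℝ) → (Fin n → ℂ) → ℝ)
    (hL : ∀ φ x, L φ x = fo x + ∑ j, φ j * f j x)
    (Ψ : Set (J → ℝ))
    (hΨ : Ψ = {φ | (∀ j, 0 ≤ φ j) ∧ (Ao + ∑ j, φ j • A j).PosSemidef})
    (hΨne : Ψ.Nonempty)
    (κ : J → ℝ) (hκ : ∀ j, 0 ≤ κ j)
    (Fκ : Set (Fin n → ℂ))
    (hFκ : Fκ = {x | 0 ≤ ∑ j, κ j * f j x})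
    (hFκne : Fκ.Nonempty) (hFκcpt : IsCompact Fκ)
    (D : (J → ℝ) → ℝ)
    (hD : ∀ φ, D φ = sSup ((fun x => L φ x) '' Fκ))
    (δ : ℝ) (hδ : 0 < δ)
    (hsphere : ∀ φ : J → ℝ, (∀ j, 0 ≤ φ j) → Real.sqrt (∑ j, φ j ^ 2) = 1 →
      δ ≤ sSup ((fun x => ∑ j, φ j * f j x) '' Fκ))
    (l : ℝ) (hl : l = sInf (fo '' Fκ)) :
    (∀ φ ∈ Ψ, l + δ * Real.sqrt (∑ j, φ j ^ 2) ≤ D φ) ∧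
    (∃ φs ∈ Ψ, ∀ φ ∈ Ψ, D φs ≤ D φ) ∧
    (∀ φ₀ ∈ Ψ, ∀ φs ∈ Ψ, (∀ φ ∈ Ψ, D φs ≤ D φ) →
      Real.sqrt (∑ j, φs j ^ 2) ≤ (D φ₀ - l) / δ) ∧
    (∀ φ₀ ∈ Ψ,
      sInf (D '' Ψ) =
        sInf (D '' {φ ∈ Ψ | Real.sqrt (∑ j, φ j ^ 2) ≤ (D φ₀ - l) / δ})) := by
  -- continuity of the basic functions
  have contfo : Continuous fo := by
    have : fo = fun x => 2 * (star so ⬝ᵥ x).re - (star x ⬝ᵥ Ao.mulVec x).re + co :=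
      funext hfo
    rw [this]; simp only [dotProduct, mulVec, Pi.star_apply]; fun_prop
  have contf : ∀ j, Continuous (f j) := by
    intro j
    have : f j = fun x => 2 * (star (s j) ⬝ᵥ x).re - (star x ⬝ᵥ (A j).mulVec x).re + c j :=
      funext (hf j)
    rw [this]; simp only [dotProduct, mulVec, Pi.star_apply]; fun_prop
  have contfφ : ∀ φ : J → ℝ, Continuous fun x => ∑ j, φ j * f j x :=
    fun φ => continuous_finset_sum _ fun j _ => (continuous_const.mul (contf j))
  have contL : ∀ φ, Continuous (L φ) := by
    intro φ
    have : L φ = fun x => fo x + ∑ j, φ j * f j x := funext (hL φ)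
    rw [this]; exact contfo.add (contfφ φ)
  -- basic sSup/sInf facts
  have hle_D : ∀ φ, ∀ x ∈ Fκ, L φ x ≤ D φ := by
    intro φ x hx
    rw [hD]
    exact le_csSup (hFκcpt.image (contL φ)).bddAbove ⟨x, hx, rfl⟩
  have hl_le : ∀ x ∈ Fκ, l ≤ fo x := by
    intro x hx
    rw [hl]
    exact csInf_le (hFκcpt.image contfo).bddBelow ⟨x, hx, rfl⟩
  -- the Euclidean norm function
  set e : (J → ℝ) → ℝ := fun φ => Real.sqrt (∑ j, φ j ^ 2) with he
  have conte : Continuous e := by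
    apply Real.continuous_sqrt.comp
    exact continuous_finset_sum _ fun j _ => (continuous_apply j).pow 2
  have he0 : ∀ φ, 0 ≤ e φ := fun φ => Real.sqrt_nonneg _
  -- (i) coercivity, only uses nonnegativity of the multipliers
  have hcoer : ∀ φ : J → ℝ, (∀ j, 0 ≤ φ j) → l + δ * e φ ≤ D φ := by
    intro φ hpos
    rcases eq_or_lt_of_le (he0 φ) with h0 | hr
    · -- e φ = 0, hence φ = 0
      have hsum : ∑ j, φ j ^ 2 = 0 := by
        by_contra hne
        have h1 : 0 ≤ ∑ j, φ j ^ 2 := Finset.sum_nonneg fun j _ => sq_nonneg _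
        have h2 : 0 < ∑ j, φ j ^ 2 := lt_of_le_of_ne h1 (Ne.symm hne)
        have := Real.sqrt_pos.mpr h2
        rw [he] at h0; simp only at h0; linarith [this]
      have hz : ∀ j, φ j = 0 := by
        intro j
        have := (Finset.sum_eq_zero_iff_of_nonneg
          (fun j _ => sq_nonneg (φ j))).mp hsum j (Finset.mem_univ j)
        exact pow_eq_zero_iff (by norm_num) |>.mp this
      obtain ⟨x₀, hx₀⟩ := hFκne
      have hLx : L φ x₀ = fo x₀ := by
        rw [hL]; simp [hz]
      have := hle_D φ x₀ hx₀
      have := hl_le x₀ hx₀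
      rw [← h0]
      linarith
    · -- e φ > 0: normalize
      set r := e φ with hrdef
      have hrne : r ≠ 0 := ne_of_gt hr
      set ψ : J → ℝ := fun j => φ j / r with hψ
      have hψpos : ∀ j, 0 ≤ ψ j := fun j => div_nonneg (hpos j) (le_of_lt hr)
      have hψnorm : Real.sqrt (∑ j, ψ j ^ 2) = 1 := by
        have hsq : ∑ j, ψ j ^ 2 = (∑ j, φ j ^ 2) / r ^ 2 := by
          rw [hψ]; simp only [div_pow]; rw [← Finset.sum_div]
        rw [hsq, Real.sqrt_div (Finset.sum_nonneg fun j _ => sq_nonneg _),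
          Real.sqrt_sq (le_of_lt hr)]
        rw [hrdef, he]
        exact div_self (by rw [hrdef, he] at hrne; exact hrne)
      have hs := hsphere ψ hψpos hψnorm
      obtain ⟨x1, hx1, _, hsup⟩ := aux_csSup_attained hFκcpt hFκne (contfφ ψ)
      rw [hsup] at hs
      have hφψ : ∑ j, φ j * f j x1 = r * ∑ j, ψ j * f j x1 := by
        rw [Finset.mul_sum]
        refine Finset.sum_congr rfl fun j _ => ?_
        rw [hψ]; field_simp
      have h1 : l ≤ fo x1 := hl_le x1 hx1
      have h2 : L φ x1 ≤ D φ := hle_D φ x1 hx1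
      have h3 : L φ x1 = fo x1 + ∑ j, φ j * f j x1 := hL φ x1
      have h4 : r * δ ≤ r * ∑ j, ψ j * f j x1 :=
        mul_le_mul_of_nonneg_left hs (le_of_lt hr)
      rw [hφψ] at h3
      nlinarith
  -- L is Lipschitz in φ uniformly over Fκ
  obtain ⟨xM, hxM, hMmax, _⟩ := aux_csSup_attained hFκcpt hFκne
    (g := fun x => ∑ j, |f j x|)
    (continuous_finset_sum _ fun j _ => (contf j).abs)
  set M : ℝ := ∑ j, |f j xM| with hM
  have hM0 : 0 ≤ M := Finset.sum_nonneg fun j _ => abs_nonneg _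
  have hlip : ∀ φ φ' : J → ℝ, D φ ≤ D φ' + M * dist φ φ' := by
    intro φ φ'
    rw [hD φ]
    apply csSup_le (hFκne.image _)
    rintro _ ⟨x, hx, rfl⟩
    have hbound : |∑ j, (φ j - φ' j) * f j x| ≤ M * dist φ φ' := by
      calc |∑ j, (φ j - φ' j) * f j x| ≤ ∑ j, |(φ j - φ' j) * f j x| :=
            Finset.abs_sum_le_sum_abs _ _
        _ ≤ ∑ j, dist φ φ' * |f j x| := by
            refine Finset.sum_le_sum fun j _ => ?_
            rw [abs_mul]
            refine mul_le_mul_of_nonneg_right ?_ (abs_nonneg _)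
            have := dist_le_pi_dist φ φ' j
            rwa [Real.dist_eq] at this
        _ = dist φ φ' * ∑ j, |f j x| := by rw [Finset.mul_sum]
        _ ≤ dist φ φ' * M := mul_le_mul_of_nonneg_left (hMmax x hx) dist_nonneg
        _ = M * dist φ φ' := mul_comm _ _
    have hsplit : L φ x = L φ' x + ∑ j, (φ j - φ' j) * f j x := by
      rw [hL, hL]
      rw [add_assoc, ← Finset.sum_add_distrib]
      congr 1
      refine Finset.sum_congr rfl fun j _ => by ring
    have := hle_D φ' x hx
    have habs := (abs_le.mp hbound).2
    show L φ x ≤ D φ' + M * dist φ φ'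
    rw [hsplit]
    linarith
  have contD : Continuous D := by
    have : LipschitzWith M.toNNReal D := by
      apply LipschitzWith.of_dist_le_mul
      intro φ φ'
      rw [Real.coe_toNNReal M hM0, Real.dist_eq, abs_le]
      constructor
      · have := hlip φ' φ
        rw [dist_comm φ' φ] at this
        linarith
      · have := hlip φ φ'
        linarith
    exact this.continuous
  -- Ψ is closed
  have herm : ∀ φ : J → ℝ, (Ao + ∑ j, φ j • A j).IsHermitian := by
    intro φ
    apply hAo.add
    rw [Matrix.IsHermitian, conjTranspose_sum]
    exact Finset.sum_congr rfl fun j _ => by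
      rw [conjTranspose_smul, star_trivial, (hA j).eq]
  have hherm_iff : ∀ (Mm : Matrix (Fin n) (Fin n) ℂ), Mm.IsHermitian → ∀ x : Fin n → ℂ,
      ((0 : ℂ) ≤ star x ⬝ᵥ Mm.mulVec x ↔ 0 ≤ (star x ⬝ᵥ Mm.mulVec x).re) := by
    intro Mm hMm x
    have him : star (star x ⬝ᵥ Mm.mulVec x) = star x ⬝ᵥ Mm.mulVec x := by
      rw [← star_dotProduct_star, star_star, star_mulVec, hMm.eq, dotProduct_mulVec]
    constructor
    · intro h; exact (Complex.le_def.mp h).1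
    · intro h
      rw [Complex.le_def]
      refine ⟨h, ?_⟩
      have := congrArg Complex.im him
      simp only [Complex.star_def, Complex.conj_im] at this
      simp only [Complex.zero_im]; linarith
  have hΨclosed : IsClosed Ψ := by
    have hΨeq : Ψ = {φ : J → ℝ | ∀ j, 0 ≤ φ j} ∩
        ⋂ x : Fin n → ℂ, {φ | 0 ≤ (star x ⬝ᵥ (Ao + ∑ j, φ j • A j).mulVec x).re} := by
      rw [hΨ]
      ext φ
      simp only [Set.mem_setOf_eq, Set.mem_inter_iff, Set.mem_iInter]
      constructor
      · rintro ⟨hpos, hpsd⟩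
        exact ⟨hpos, fun x => (hherm_iff _ (herm φ) x).mp (hpsd.dotProduct_mulVec_nonneg x)⟩
      · rintro ⟨hpos, hre⟩
        exact ⟨hpos, .of_dotProduct_mulVec_nonneg (herm φ) fun x => (hherm_iff _ (herm φ) x).mpr (hre x)⟩
    rw [hΨeq]
    apply IsClosed.inter
    · have : {φ : J → ℝ | ∀ j, 0 ≤ φ j} = ⋂ j, {φ | 0 ≤ φ j} := by ext; simp
      rw [this]
      exact isClosed_iInter fun j => isClosed_le continuous_const (continuous_apply j)
    · refine isClosed_iInter fun x => isClosed_le continuous_const ?_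
      simp only [dotProduct, mulVec, Matrix.add_apply, Matrix.sum_apply, Matrix.smul_apply]
      fun_prop
  -- sublevel sets are compact
  have hcptK : ∀ b : ℝ, 0 ≤ b → IsCompact {φ ∈ Ψ | e φ ≤ b} := by
    intro b hb
    apply (isCompact_closedBall (0 : J → ℝ) b).of_isClosed_subset
    · exact hΨclosed.inter (isClosed_le conte continuous_const)
    · intro φ hφ
      rw [Metric.mem_closedBall, dist_zero_right]
      rw [pi_norm_le_iff_of_nonneg hb]
      intro j
      have h1 : φ j ^ 2 ≤ ∑ k, φ k ^ 2 :=
        Finset.single_le_sum (fun k _ => sq_nonneg (φ k)) (Finset.mem_univ j)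
      have h2 : |φ j| ≤ e φ := by
        rw [he]
        calc |φ j| = Real.sqrt (φ j ^ 2) := (Real.sqrt_sq_eq_abs _).symm
          _ ≤ Real.sqrt (∑ k, φ k ^ 2) := Real.sqrt_le_sqrt h1
      calc ‖φ j‖ = |φ j| := rfl
        _ ≤ e φ := h2
        _ ≤ b := hφ.2
  -- key: D φ₀ - l ≥ 0 and membership in the sublevel set
  have hbound_mem : ∀ φ₀ ∈ Ψ, ∀ φ ∈ Ψ, D φ ≤ D φ₀ → e φ ≤ (D φ₀ - l) / δ := by
    intro φ₀ hφ₀ φ hφ hle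
    rw [hΨ] at hφ
    have h1 := hcoer φ hφ.1
    rw [le_div_iff₀ hδ]
    nlinarith
  have hb0 : ∀ φ₀ ∈ Ψ, 0 ≤ (D φ₀ - l) / δ := by
    intro φ₀ hφ₀
    have h1 := hcoer φ₀ (by rw [hΨ] at hφ₀; exact hφ₀.1)
    have := he0 φ₀
    apply div_nonneg _ (le_of_lt hδ)
    nlinarith
  -- (ii) existence of a global minimizer
  obtain ⟨φ₀, hφ₀⟩ := hΨne
  have hexists : ∃ φs ∈ Ψ, ∀ φ ∈ Ψ, D φs ≤ D φ := by
    set b := (D φ₀ - l) / δ with hb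
    have hKcpt := hcptK b (hb0 φ₀ hφ₀)
    have hφ₀K : φ₀ ∈ {φ ∈ Ψ | e φ ≤ b} :=
      ⟨hφ₀, hbound_mem φ₀ hφ₀ φ₀ hφ₀ le_rfl⟩
    obtain ⟨φs, hφsK, hminK⟩ := hKcpt.exists_isMinOn ⟨φ₀, hφ₀K⟩ contD.continuousOn
    refine ⟨φs, hφsK.1, fun φ hφ => ?_⟩
    by_cases hcase : e φ ≤ b
    · exact hminK ⟨hφ, hcase⟩
    · push_neg at hcase
      have h1 := hcoer φ (by rw [hΨ] at hφ; exact hφ.1)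
      have h2 : D φs ≤ D φ₀ := hminK hφ₀K
      have h3 : δ * b = D φ₀ - l := by
        rw [hb]; field_simp
      nlinarith
  refine ⟨fun φ hφ => hcoer φ (by rw [hΨ] at hφ; exact hφ.1), hexists, ?_, ?_⟩
  · -- (iii)
    intro φ₀' hφ₀' φs hφs hmin
    exact hbound_mem φ₀' hφ₀' φs hφs (hmin φ₀' hφ₀')
  · -- (iv)
    intro φ₀' hφ₀'
    obtain ⟨φs, hφs, hmin⟩ := hexists
    set b := (D φ₀' - l) / δ with hb
    set S := {φ ∈ Ψ | Real.sqrt (∑ j, φ j ^ 2) ≤ b} with hS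
    have hφsS : φs ∈ S := ⟨hφs, hbound_mem φ₀' hφ₀' φs hφs (hmin φ₀' hφ₀')⟩
    have hbdd : BddBelow (D '' Ψ) := by
      refine ⟨l, ?_⟩
      rintro _ ⟨φ, hφ, rfl⟩
      have h1 := hcoer φ (by rw [hΨ] at hφ; exact hφ.1)
      have := he0 φ
      nlinarith
    have h1 : sInf (D '' Ψ) = D φs := by
      apply le_antisymm
      · exact csInf_le hbdd (Set.mem_image_of_mem D hφs)
      · apply le_csInf ⟨D φ₀', Set.mem_image_of_mem D hφ₀'⟩
        rintro _ ⟨φ, hφ, rfl⟩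
        exact hmin φ hφ
    have h2 : sInf (D '' S) = D φs := by
      apply le_antisymm
      · refine csInf_le ⟨l, ?_⟩ (Set.mem_image_of_mem D hφsS)
        rintro _ ⟨φ, hφ, rfl⟩
        obtain ⟨hφΨ, hφb⟩ := hφ
        rw [hΨ] at hφΨ
        have h1 := hcoer φ hφΨ.1
        have := he0 φ
        nlinarith
      · apply le_csInf ⟨D φs, Set.mem_image_of_mem D hφsS⟩
        rintro _ ⟨φ, hφ, rfl⟩
        exact hmin φ hφ.1
    rw [h1, h2]
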